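/- Let 𝒫₁, 𝒫₂, 𝒫₀ be real n_p × n_q matrices, Q_p a symmetric real n_p × n_p matrix, Q_q a symmetric real n_q × n_q matrix, and let Ω = [a₁, b₁] × [a₂, b₂] with a₁ < b₁, a₂ < b₂. Let p : ℝ × Ω → ℝ^{n_p} and q : ℝ × Ω → ℝ^{n_q} be continuously differentiable, set e_p = Q_p·p and e_q = Q_q·q, and suppose that on ℝ × Ω: ∂p/∂t = 𝒫₁·∂e_q/∂ξ₁ + 𝒫₂·∂e_q/∂ξ₂ + 𝒫₀·e_q and ∂q/∂t = 𝒫₁ᵀ·∂e_p/∂ξ₁ + 𝒫₂ᵀ·∂e_p/∂ξ₂ − 𝒫₀ᵀ·e_p. Then the energy H(t) = (1/2)·∬_Ω [pᵀQ_p p + qᵀQ_q q] dA is differentiable in t and dH/dt (t) = ∫_{a₂}^{b₂} [e_pᵀ𝒫₁e_q](t, b₁, ξ₂) − [e_pᵀ𝒫₁e_q](t, a₁, ξ₂) dξ₂ + ∫_{a₁}^{b₁} [e_pᵀ𝒫₂e_q](t, ξ₁, b₂) − [e_pᵀ𝒫₂e_q](t, ξ₁, a₂) dξ₁. -/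

import Mathlib

open Matrix MeasureTheory

section PHaux
variable {E : Type*} [NormedAddCommGroup E] [NormedSpace ℝ E]

lemma pH_hasDerivAt_comp_affine {f : ℝ×ℝ×ℝ → E} (hf : ContDiff ℝ 1 f)
    (c : ℝ×ℝ×ℝ) (L : ℝ →L[ℝ] ℝ×ℝ×ℝ) (t : ℝ) :
    HasDerivAt (fun s => f (c + L s)) (fderiv ℝ f (c + L t) (L 1)) t := by
  have h1 : HasFDerivAt (fun s : ℝ => c + L s) (L : ℝ →L[ℝ] ℝ×ℝ×ℝ) t :=
    L.hasFDerivAt.const_add c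
  have h2 : HasFDerivAt f (fderiv ℝ f (c + L t)) (c + L t) :=
    (hf.differentiable one_ne_zero (c + L t)).hasFDerivAt
  have h3 := (h2.comp t h1).hasDerivAt
  simpa [Function.comp_def] using h3

lemma pH_hasDerivAt_t {f : ℝ×ℝ×ℝ → E} (hf : ContDiff ℝ 1 f) (t ξ₁ ξ₂ : ℝ) :
    HasDerivAt (fun s => f (s, ξ₁, ξ₂)) (fderiv ℝ f (t, ξ₁, ξ₂) (1,0,0)) t := by
  have := pH_hasDerivAt_comp_affine hf ((0:ℝ), ξ₁, ξ₂)
    (ContinuousLinearMap.inl ℝ ℝ (ℝ×ℝ)) t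
  simpa [Prod.ext_iff, Prod.zero_eq_mk] using this

lemma pH_hasDerivAt_x1 {f : ℝ×ℝ×ℝ → E} (hf : ContDiff ℝ 1 f) (t ξ₁ ξ₂ : ℝ) :
    HasDerivAt (fun ζ => f (t, ζ, ξ₂)) (fderiv ℝ f (t, ξ₁, ξ₂) (0,1,0)) ξ₁ := by
  have := pH_hasDerivAt_comp_affine hf (t, (0:ℝ), ξ₂)
    ((ContinuousLinearMap.inr ℝ ℝ (ℝ×ℝ)).comp (ContinuousLinearMap.inl ℝ ℝ ℝ)) ξ₁
  simpa [Prod.ext_iff] using this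

lemma pH_hasDerivAt_x2 {f : ℝ×ℝ×ℝ → E} (hf : ContDiff ℝ 1 f) (t ξ₁ ξ₂ : ℝ) :
    HasDerivAt (fun ζ => f (t, ξ₁, ζ)) (fderiv ℝ f (t, ξ₁, ξ₂) (0,0,1)) ξ₂ := by
  have := pH_hasDerivAt_comp_affine hf (t, ξ₁, (0:ℝ))
    ((ContinuousLinearMap.inr ℝ ℝ (ℝ×ℝ)).comp (ContinuousLinearMap.inr ℝ ℝ ℝ)) ξ₂
  simpa [Prod.ext_iff] using this

lemma pH_hasDerivAt_dot {n m : ℕ} (A : Matrix (Fin n) (Fin m) ℝ)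
    {f : ℝ → Fin n → ℝ} {g : ℝ → Fin m → ℝ} {f' : Fin n → ℝ} {g' : Fin m → ℝ} {x : ℝ}
    (hf : HasDerivAt f f' x) (hg : HasDerivAt g g' x) :
    HasDerivAt (fun s => f s ⬝ᵥ A.mulVec (g s))
      (f' ⬝ᵥ A.mulVec (g x) + f x ⬝ᵥ A.mulVec g') x := by
  have hfi : ∀ i, HasDerivAt (fun s => f s i) (f' i) x := fun i => by
    simpa [Function.comp_def] using ((ContinuousLinearMap.proj i : (Fin n → ℝ) →L[ℝ] ℝ).hasFDerivAt.comp_hasDerivAt x hf)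
  have hgj : ∀ j, HasDerivAt (fun s => g s j) (g' j) x := fun j => by
    simpa [Function.comp_def] using ((ContinuousLinearMap.proj j : (Fin m → ℝ) →L[ℝ] ℝ).hasFDerivAt.comp_hasDerivAt x hg)
  have hrow : ∀ i, HasDerivAt (fun s => ∑ j, A i j * g s j) (∑ j, A i j * g' j) x :=
    fun i => HasDerivAt.fun_sum fun j _ => (hgj j).const_mul _
  have main : HasDerivAt (fun s => ∑ i, f s i * ∑ j, A i j * g s j)
      (∑ i, (f' i * ∑ j, A i j * g x j + f x i * ∑ j, A i j * g' j)) x :=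
    HasDerivAt.fun_sum fun i _ => (hfi i).mul (hrow i)
  convert main using 2 <;> simp [dotProduct, Matrix.mulVec, Finset.sum_add_distrib]

lemma pH_hasDerivAt_mulVec {n m : ℕ} (A : Matrix (Fin n) (Fin m) ℝ)
    {v : ℝ → Fin m → ℝ} {v' : Fin m → ℝ} {x : ℝ} (hv : HasDerivAt v v' x) :
    HasDerivAt (fun s => A.mulVec (v s)) (A.mulVec v') x := by
  have := (LinearMap.toContinuousLinearMap A.mulVecLin).hasFDerivAt.comp_hasDerivAt x hv
  simpa [Function.comp_def] using this

lemma pH_dot_transpose {n m : ℕ} (A : Matrix (Fin n) (Fin m) ℝ) (u : Fin m → ℝ) (w : Fin n → ℝ) :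
    u ⬝ᵥ Aᵀ.mulVec w = w ⬝ᵥ A.mulVec u := by
  rw [Matrix.dotProduct_mulVec, Matrix.vecMul_transpose, dotProduct_comm]

lemma pH_dot_symm {n : ℕ} {A : Matrix (Fin n) (Fin n) ℝ} (hA : A.IsSymm) (u v : Fin n → ℝ) :
    v ⬝ᵥ A.mulVec u + u ⬝ᵥ A.mulVec v = 2 * (A.mulVec u ⬝ᵥ v) := by
  have h1 : v ⬝ᵥ A.mulVec u = A.mulVec u ⬝ᵥ v := dotProduct_comm _ _
  have h2 : u ⬝ᵥ A.mulVec v = A.mulVec u ⬝ᵥ v := by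
    conv_lhs => rw [← hA]
    rw [pH_dot_transpose]
    rw [h1]
  rw [h1, h2]; ring
end PHaux

theorem pH_2D_energy_balance
    (np nq : ℕ) (P1 P2 P0 : Matrix (Fin np) (Fin nq) ℝ)
    (Qp : Matrix (Fin np) (Fin np) ℝ) (hQp : Qp.IsSymm)
    (Qq : Matrix (Fin nq) (Fin nq) ℝ) (hQq : Qq.IsSymm)
    (a₁ b₁ a₂ b₂ : ℝ) (hab₁ : a₁ < b₁) (hab₂ : a₂ < b₂)
    (p : ℝ × ℝ × ℝ → Fin np → ℝ) (q : ℝ × ℝ × ℝ → Fin nq → ℝ)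
    (hp : ContDiff ℝ 1 p) (hq : ContDiff ℝ 1 q)
    (ep : ℝ → ℝ → ℝ → Fin np → ℝ) (eq' : ℝ → ℝ → ℝ → Fin nq → ℝ)
    (hep : ∀ t ξ₁ ξ₂, ep t ξ₁ ξ₂ = Qp.mulVec (p (t, ξ₁, ξ₂)))
    (heq : ∀ t ξ₁ ξ₂, eq' t ξ₁ ξ₂ = Qq.mulVec (q (t, ξ₁, ξ₂)))
    (hpde_p : ∀ t : ℝ, ∀ ξ₁ ∈ Set.Icc a₁ b₁, ∀ ξ₂ ∈ Set.Icc a₂ b₂,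
      deriv (fun s => p (s, ξ₁, ξ₂)) t =
        P1.mulVec (deriv (fun ζ => eq' t ζ ξ₂) ξ₁)
          + P2.mulVec (deriv (fun ζ => eq' t ξ₁ ζ) ξ₂)
          + P0.mulVec (eq' t ξ₁ ξ₂))
    (hpde_q : ∀ t : ℝ, ∀ ξ₁ ∈ Set.Icc a₁ b₁, ∀ ξ₂ ∈ Set.Icc a₂ b₂,
      deriv (fun s => q (s, ξ₁, ξ₂)) t =
        P1ᵀ.mulVec (deriv (fun ζ => ep t ζ ξ₂) ξ₁)
          + P2ᵀ.mulVec (deriv (fun ζ => ep t ξ₁ ζ) ξ₂)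
          - P0ᵀ.mulVec (ep t ξ₁ ξ₂))
    (H : ℝ → ℝ)
    (hH : ∀ t, H t = (1 / 2) *
      ∫ ξ in Set.Icc a₁ b₁ ×ˢ Set.Icc a₂ b₂,
        (p (t, ξ.1, ξ.2) ⬝ᵥ Qp.mulVec (p (t, ξ.1, ξ.2))
          + q (t, ξ.1, ξ.2) ⬝ᵥ Qq.mulVec (q (t, ξ.1, ξ.2)))) :
    ∀ t, HasDerivAt H
      ((∫ ξ₂ in a₂..b₂,
          (ep t b₁ ξ₂ ⬝ᵥ P1.mulVec (eq' t b₁ ξ₂)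
            - ep t a₁ ξ₂ ⬝ᵥ P1.mulVec (eq' t a₁ ξ₂)))
        + ∫ ξ₁ in a₁..b₁,
            (ep t ξ₁ b₂ ⬝ᵥ P2.mulVec (eq' t ξ₁ b₂)
              - ep t ξ₁ a₂ ⬝ᵥ P2.mulVec (eq' t ξ₁ a₂))) t := by
  intro t₀
  have hΩm : MeasurableSet (Set.Icc a₁ b₁ ×ˢ Set.Icc a₂ b₂) :=
    measurableSet_Icc.prod measurableSet_Icc
  have hΩc : IsCompact (Set.Icc a₁ b₁ ×ˢ Set.Icc a₂ b₂) :=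
    isCompact_Icc.prod isCompact_Icc
  -- basic continuity facts
  have hpc : Continuous p := hp.continuous
  have hqc : Continuous q := hq.continuous
  have hdpc : ∀ v : ℝ × ℝ × ℝ, Continuous fun x => fderiv ℝ p x v := fun v =>
    (hp.continuous_fderiv one_ne_zero).clm_apply continuous_const
  have hdqc : ∀ v : ℝ × ℝ × ℝ, Continuous fun x => fderiv ℝ q x v := fun v =>
    (hq.continuous_fderiv one_ne_zero).clm_apply continuous_const
  -- time derivative of the energy density, pointwise
  set F : ℝ → ℝ × ℝ → ℝ := fun t ξ =>
    p (t, ξ.1, ξ.2) ⬝ᵥ Qp.mulVec (p (t, ξ.1, ξ.2))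
      + q (t, ξ.1, ξ.2) ⬝ᵥ Qq.mulVec (q (t, ξ.1, ξ.2)) with hF
  set F' : ℝ → ℝ × ℝ → ℝ := fun t ξ =>
    2 * (Qp.mulVec (p (t, ξ.1, ξ.2)) ⬝ᵥ fderiv ℝ p (t, ξ.1, ξ.2) (1,0,0)
      + Qq.mulVec (q (t, ξ.1, ξ.2)) ⬝ᵥ fderiv ℝ q (t, ξ.1, ξ.2) (1,0,0)) with hF'
  have hderivF : ∀ (t : ℝ) (ξ : ℝ × ℝ), HasDerivAt (fun s => F s ξ) (F' t ξ) t := by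
    intro t ξ
    have h1 := pH_hasDerivAt_dot Qp (pH_hasDerivAt_t hp t ξ.1 ξ.2) (pH_hasDerivAt_t hp t ξ.1 ξ.2)
    have h2 := pH_hasDerivAt_dot Qq (pH_hasDerivAt_t hq t ξ.1 ξ.2) (pH_hasDerivAt_t hq t ξ.1 ξ.2)
    have h3 := h1.add h2
    refine h3.congr_deriv ?_
    rw [hF']
    rw [pH_dot_symm hQp, pH_dot_symm hQq]
    ring
  have hFc : ∀ t : ℝ, Continuous fun ξ : ℝ × ℝ => F t ξ := by
    intro t
    have hemb : Continuous fun ξ : ℝ × ℝ => ((t, ξ.1, ξ.2) : ℝ × ℝ × ℝ) := by fun_prop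
    rw [hF]
    exact ((hpc.comp hemb).dotProduct
        (continuous_const.matrix_mulVec (hpc.comp hemb))).add
      ((hqc.comp hemb).dotProduct (continuous_const.matrix_mulVec (hqc.comp hemb)))
  have hGc : Continuous fun y : ℝ × ℝ × ℝ =>
      2 * (Qp.mulVec (p y) ⬝ᵥ fderiv ℝ p y (1,0,0)
        + Qq.mulVec (q y) ⬝ᵥ fderiv ℝ q y (1,0,0)) :=
    continuous_const.mul
      (((continuous_const.matrix_mulVec hpc).dotProduct (hdpc _)).add
        ((continuous_const.matrix_mulVec hqc).dotProduct (hdqc _)))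
  have hF'c : ∀ t : ℝ, Continuous fun ξ : ℝ × ℝ => F' t ξ := by
    intro t
    have hemb : Continuous fun ξ : ℝ × ℝ => ((t, ξ.1, ξ.2) : ℝ × ℝ × ℝ) := by fun_prop
    rw [hF']
    exact hGc.comp hemb
  -- Step 1: differentiation under the integral sign
  have step1 : HasDerivAt (fun t => ∫ ξ in Set.Icc a₁ b₁ ×ˢ Set.Icc a₂ b₂, F t ξ)
      (∫ ξ in Set.Icc a₁ b₁ ×ˢ Set.Icc a₂ b₂, F' t₀ ξ) t₀ := by
    have hK : IsCompact ((Set.Icc (t₀-1) (t₀+1)) ×ˢ (Set.Icc a₁ b₁ ×ˢ Set.Icc a₂ b₂)) :=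
      isCompact_Icc.prod hΩc
    have hGc2 : Continuous fun y : ℝ × (ℝ × ℝ) => F' y.1 y.2 := by
      rw [hF']
      have hemb : Continuous fun y : ℝ × (ℝ × ℝ) => ((y.1, y.2.1, y.2.2) : ℝ × ℝ × ℝ) := by
        fun_prop
      exact hGc.comp hemb
    obtain ⟨C, hC⟩ := hK.exists_bound_of_continuousOn hGc2.continuousOn
    refine (hasDerivAt_integral_of_dominated_loc_of_deriv_le (s := Metric.ball t₀ 1) (bound := fun _ => C) (Metric.ball_mem_nhds t₀ one_pos)
      (Filter.Eventually.of_forall fun t => ((hFc t).aestronglyMeasurable))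
      (((hFc t₀).continuousOn).integrableOn_compact hΩc)
      ((hF'c t₀).aestronglyMeasurable)
      ?_ ?_ ?_).2
    · rw [ae_restrict_iff' hΩm]
      refine Filter.Eventually.of_forall fun ξ hξ x hx => ?_
      have hx' : x ∈ Set.Icc (t₀-1) (t₀+1) := by
        have := abs_lt.mp (by simpa [Real.dist_eq] using hx)
        constructor <;> linarith
      exact hC (x, ξ) ⟨hx', hξ⟩
    · exact (integrableOn_const_iff).2 (Or.inr hΩc.measure_lt_top)
    · exact Filter.Eventually.of_forall fun ξ x _ => hderivF x ξ
  -- spatial derivatives of the co-energy variables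
  have hep1 : ∀ t ξ₁ ξ₂ : ℝ, HasDerivAt (fun ζ => ep t ζ ξ₂)
      (Qp.mulVec (fderiv ℝ p (t, ξ₁, ξ₂) (0,1,0))) ξ₁ := by
    intro t ξ₁ ξ₂
    simp only [hep]
    exact pH_hasDerivAt_mulVec Qp (pH_hasDerivAt_x1 hp t ξ₁ ξ₂)
  have hep2 : ∀ t ξ₁ ξ₂ : ℝ, HasDerivAt (fun ζ => ep t ξ₁ ζ)
      (Qp.mulVec (fderiv ℝ p (t, ξ₁, ξ₂) (0,0,1))) ξ₂ := by
    intro t ξ₁ ξ₂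
    simp only [hep]
    exact pH_hasDerivAt_mulVec Qp (pH_hasDerivAt_x2 hp t ξ₁ ξ₂)
  have heq1 : ∀ t ξ₁ ξ₂ : ℝ, HasDerivAt (fun ζ => eq' t ζ ξ₂)
      (Qq.mulVec (fderiv ℝ q (t, ξ₁, ξ₂) (0,1,0))) ξ₁ := by
    intro t ξ₁ ξ₂
    simp only [heq]
    exact pH_hasDerivAt_mulVec Qq (pH_hasDerivAt_x1 hq t ξ₁ ξ₂)
  have heq2 : ∀ t ξ₁ ξ₂ : ℝ, HasDerivAt (fun ζ => eq' t ξ₁ ζ)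
      (Qq.mulVec (fderiv ℝ q (t, ξ₁, ξ₂) (0,0,1))) ξ₂ := by
    intro t ξ₁ ξ₂
    simp only [heq]
    exact pH_hasDerivAt_mulVec Qq (pH_hasDerivAt_x2 hq t ξ₁ ξ₂)
  -- the PDE rewritten with fderiv
  have hpt : ∀ t : ℝ, ∀ ξ₁ ∈ Set.Icc a₁ b₁, ∀ ξ₂ ∈ Set.Icc a₂ b₂,
      fderiv ℝ p (t, ξ₁, ξ₂) (1,0,0) =
        P1.mulVec (Qq.mulVec (fderiv ℝ q (t, ξ₁, ξ₂) (0,1,0)))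
          + P2.mulVec (Qq.mulVec (fderiv ℝ q (t, ξ₁, ξ₂) (0,0,1)))
          + P0.mulVec (Qq.mulVec (q (t, ξ₁, ξ₂))) := by
    intro t ξ₁ h1 ξ₂ h2
    have h := hpde_p t ξ₁ h1 ξ₂ h2
    rw [(pH_hasDerivAt_t hp t ξ₁ ξ₂).deriv, (heq1 t ξ₁ ξ₂).deriv,
      (heq2 t ξ₁ ξ₂).deriv, heq] at h
    exact h
  have hqt : ∀ t : ℝ, ∀ ξ₁ ∈ Set.Icc a₁ b₁, ∀ ξ₂ ∈ Set.Icc a₂ b₂,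
      fderiv ℝ q (t, ξ₁, ξ₂) (1,0,0) =
        P1ᵀ.mulVec (Qp.mulVec (fderiv ℝ p (t, ξ₁, ξ₂) (0,1,0)))
          + P2ᵀ.mulVec (Qp.mulVec (fderiv ℝ p (t, ξ₁, ξ₂) (0,0,1)))
          - P0ᵀ.mulVec (Qp.mulVec (p (t, ξ₁, ξ₂))) := by
    intro t ξ₁ h1 ξ₂ h2
    have h := hpde_q t ξ₁ h1 ξ₂ h2
    rw [(pH_hasDerivAt_t hq t ξ₁ ξ₂).deriv, (hep1 t ξ₁ ξ₂).deriv,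
      (hep2 t ξ₁ ξ₂).deriv, hep] at h
    exact h
  -- integrands for the divergence terms
  set D1 : ℝ × ℝ → ℝ := fun ξ =>
      Qp.mulVec (fderiv ℝ p (t₀, ξ.1, ξ.2) (0,1,0)) ⬝ᵥ
          P1.mulVec (Qq.mulVec (q (t₀, ξ.1, ξ.2)))
        + Qp.mulVec (p (t₀, ξ.1, ξ.2)) ⬝ᵥ
            P1.mulVec (Qq.mulVec (fderiv ℝ q (t₀, ξ.1, ξ.2) (0,1,0))) with hD1
  set D2 : ℝ × ℝ → ℝ := fun ξ =>
      Qp.mulVec (fderiv ℝ p (t₀, ξ.1, ξ.2) (0,0,1)) ⬝ᵥ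
          P2.mulVec (Qq.mulVec (q (t₀, ξ.1, ξ.2)))
        + Qp.mulVec (p (t₀, ξ.1, ξ.2)) ⬝ᵥ
            P2.mulVec (Qq.mulVec (fderiv ℝ q (t₀, ξ.1, ξ.2) (0,0,1))) with hD2
  have hD1deriv : ∀ ζ η : ℝ,
      HasDerivAt (fun z => ep t₀ z η ⬝ᵥ P1.mulVec (eq' t₀ z η)) (D1 (ζ, η)) ζ := by
    intro ζ η
    have h := pH_hasDerivAt_dot P1 (hep1 t₀ ζ η) (heq1 t₀ ζ η)
    rw [hD1]
    simpa [hep, heq] using h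
  have hD2deriv : ∀ ζ η : ℝ,
      HasDerivAt (fun z => ep t₀ ζ z ⬝ᵥ P2.mulVec (eq' t₀ ζ z)) (D2 (ζ, η)) η := by
    intro ζ η
    have h := pH_hasDerivAt_dot P2 (hep2 t₀ ζ η) (heq2 t₀ ζ η)
    rw [hD2]
    simpa [hep, heq] using h
  -- pointwise divergence identity on Ω
  have hkey : Set.EqOn (F' t₀) (fun ξ => 2 * (D1 ξ + D2 ξ))
      (Set.Icc a₁ b₁ ×ˢ Set.Icc a₂ b₂) := by
    intro ξ hξ
    obtain ⟨h1, h2⟩ := hξ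
    simp only [hF', hD1, hD2]
    rw [hpt t₀ ξ.1 h1 ξ.2 h2, hqt t₀ ξ.1 h1 ξ.2 h2]
    rw [dotProduct_add, dotProduct_add, dotProduct_sub,
      dotProduct_add]
    rw [pH_dot_transpose P1, pH_dot_transpose P2, pH_dot_transpose P0]
    ring
  -- continuity / integrability of the divergence integrands
  have hemb2 : Continuous fun ξ : ℝ × ℝ => ((t₀, ξ.1, ξ.2) : ℝ × ℝ × ℝ) := by fun_prop
  have hD1c : Continuous D1 := by
    rw [hD1]
    exact ((continuous_const.matrix_mulVec ((hdpc _).comp hemb2)).dotProduct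
        (continuous_const.matrix_mulVec
          (continuous_const.matrix_mulVec (hqc.comp hemb2)))).add
      ((continuous_const.matrix_mulVec (hpc.comp hemb2)).dotProduct
        (continuous_const.matrix_mulVec
          (continuous_const.matrix_mulVec ((hdqc _).comp hemb2))))
  have hD2c : Continuous D2 := by
    rw [hD2]
    exact ((continuous_const.matrix_mulVec ((hdpc _).comp hemb2)).dotProduct
        (continuous_const.matrix_mulVec
          (continuous_const.matrix_mulVec (hqc.comp hemb2)))).add
      ((continuous_const.matrix_mulVec (hpc.comp hemb2)).dotProduct
        (continuous_const.matrix_mulVec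
          (continuous_const.matrix_mulVec ((hdqc _).comp hemb2))))
  have hD1i : IntegrableOn D1 (Set.Icc a₁ b₁ ×ˢ Set.Icc a₂ b₂) :=
    hD1c.continuousOn.integrableOn_compact hΩc
  have hD2i : IntegrableOn D2 (Set.Icc a₁ b₁ ×ˢ Set.Icc a₂ b₂) :=
    hD2c.continuousOn.integrableOn_compact hΩc
  -- compute ∫ D2 via Fubini and FTC in the second variable
  have hI2 : ∫ ξ in Set.Icc a₁ b₁ ×ˢ Set.Icc a₂ b₂, D2 ξ =
      ∫ ξ₁ in a₁..b₁, (ep t₀ ξ₁ b₂ ⬝ᵥ P2.mulVec (eq' t₀ ξ₁ b₂)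
        - ep t₀ ξ₁ a₂ ⬝ᵥ P2.mulVec (eq' t₀ ξ₁ a₂)) := by
    have h0 : ∫ ξ in Set.Icc a₁ b₁ ×ˢ Set.Icc a₂ b₂, D2 ξ =
        ∫ x in Set.Icc a₁ b₁, ∫ y in Set.Icc a₂ b₂, D2 (x, y) := by
      rw [MeasureTheory.Measure.volume_eq_prod] at hD2i ⊢
      exact setIntegral_prod D2 hD2i
    have inner : ∀ x : ℝ, (∫ y in Set.Icc a₂ b₂, D2 (x, y)) =
        ep t₀ x b₂ ⬝ᵥ P2.mulVec (eq' t₀ x b₂)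
          - ep t₀ x a₂ ⬝ᵥ P2.mulVec (eq' t₀ x a₂) := by
      intro x
      rw [MeasureTheory.integral_Icc_eq_integral_Ioc,
        ← intervalIntegral.integral_of_le hab₂.le]
      exact intervalIntegral.integral_eq_sub_of_hasDerivAt
        (fun y _ => hD2deriv x y)
        ((hD2c.comp (by fun_prop : Continuous fun y : ℝ => ((x, y) : ℝ × ℝ))).intervalIntegrable _ _)
    rw [h0]
    simp only [inner]
    rw [MeasureTheory.integral_Icc_eq_integral_Ioc,
      ← intervalIntegral.integral_of_le hab₁.le]
  -- compute ∫ D1 via Fubini (symmetric) and FTC in the first variable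
  have hI1 : ∫ ξ in Set.Icc a₁ b₁ ×ˢ Set.Icc a₂ b₂, D1 ξ =
      ∫ ξ₂ in a₂..b₂, (ep t₀ b₁ ξ₂ ⬝ᵥ P1.mulVec (eq' t₀ b₁ ξ₂)
        - ep t₀ a₁ ξ₂ ⬝ᵥ P1.mulVec (eq' t₀ a₁ ξ₂)) := by
    have h0 : ∫ ξ in Set.Icc a₁ b₁ ×ˢ Set.Icc a₂ b₂, D1 ξ =
        ∫ y in Set.Icc a₂ b₂, ∫ x in Set.Icc a₁ b₁, D1 (x, y) := by
      rw [MeasureTheory.Measure.volume_eq_prod] at hD1i ⊢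
      rw [← Measure.prod_restrict]
      exact integral_prod_symm D1 (by rwa [Measure.prod_restrict])
    have inner : ∀ y : ℝ, (∫ x in Set.Icc a₁ b₁, D1 (x, y)) =
        ep t₀ b₁ y ⬝ᵥ P1.mulVec (eq' t₀ b₁ y)
          - ep t₀ a₁ y ⬝ᵥ P1.mulVec (eq' t₀ a₁ y) := by
      intro y
      rw [MeasureTheory.integral_Icc_eq_integral_Ioc,
        ← intervalIntegral.integral_of_le hab₁.le]
      exact intervalIntegral.integral_eq_sub_of_hasDerivAt
        (fun x _ => hD1deriv x y)
        ((hD1c.comp (by fun_prop : Continuous fun x : ℝ => ((x, y) : ℝ × ℝ))).intervalIntegrable _ _)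
    rw [h0]
    simp only [inner]
    rw [MeasureTheory.integral_Icc_eq_integral_Ioc,
      ← intervalIntegral.integral_of_le hab₂.le]
  -- split the integral of F'
  have hsplit : ∫ ξ in Set.Icc a₁ b₁ ×ˢ Set.Icc a₂ b₂, F' t₀ ξ =
      2 * ((∫ ξ in Set.Icc a₁ b₁ ×ˢ Set.Icc a₂ b₂, D1 ξ)
        + ∫ ξ in Set.Icc a₁ b₁ ×ˢ Set.Icc a₂ b₂, D2 ξ) := by
    rw [setIntegral_congr_fun hΩm hkey, MeasureTheory.integral_const_mul,
      MeasureTheory.integral_add hD1i hD2i]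
  -- final assembly
  have hHfun : H = fun t => (1/2) * ∫ ξ in Set.Icc a₁ b₁ ×ˢ Set.Icc a₂ b₂, F t ξ := by
    funext t
    rw [hH t]
  rw [hHfun]
  have final := step1.const_mul ((1:ℝ)/2)
  refine final.congr_deriv ?_
  rw [hsplit, hI1, hI2]
  ring
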